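/- For positive integers α, β with α + β arbitrary, the finite sum identity ∑_{j=1}^{α} (1/j) ∑_{k=j}^{α} (-1)^{k-j} C(α,k) C(-1-α-β, k) C(β, k-j) = ∑_{j=1}^{α} ((-1)^β/j) · C(-α-1, j+β) · C(α+β, j+β) holds in the rationals. -/

import Mathlib

/-- Generalized binomial coefficient `C(x,k) = x(x-1)⋯(x-k+1)/k!` for rational `x`. -/
def gbinom (x : ℚ) (k : ℕ) : ℚ := (∏ i ∈ Finset.range k, (x - i)) / (Nat.factorial k)

open Finset


/-- Trinomial revision without the `k ≤ n` hypothesis. -/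
lemma choose_mul' {n k s : ℕ} (hsk : s ≤ k) :
    n.choose k * k.choose s = n.choose s * (n - s).choose (k - s) := by
  rcases le_or_gt k n with h | h
  · exact Nat.choose_mul hsk
  · rw [Nat.choose_eq_zero_of_lt h, Nat.zero_mul]
    rcases le_or_gt s n with hs | hs
    · rw [Nat.choose_eq_zero_of_lt (by omega : n - s < k - s), Nat.mul_zero]
    · rw [Nat.choose_eq_zero_of_lt hs, Nat.zero_mul]

/-- Vandermonde over an explicit range. -/
lemma vand3 (m n q : ℕ) :
    (m + n).choose q = ∑ w ∈ range (q + 1), m.choose w * n.choose (q - w) := by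
  rw [Nat.add_choose_eq, Finset.Nat.sum_antidiagonal_eq_sum_range_succ_mk]

/-- Symmetric Vandermonde with extended range. -/
lemma vandsym (m n N : ℕ) (h : n ≤ N) :
    (m + n).choose n = ∑ t ∈ range (N + 1), m.choose t * n.choose t := by
  rw [vand3 m n n]
  have h1 : ∑ w ∈ range (n + 1), m.choose w * n.choose (n - w)
      = ∑ t ∈ range (n + 1), m.choose t * n.choose t := by
    refine Finset.sum_congr rfl fun t ht => ?_
    rw [Nat.choose_symm (by simpa using Nat.lt_succ_iff.mp (mem_range.mp ht))]
  rw [h1]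
  apply Finset.sum_subset
  · exact Finset.range_subset_range.mpr (by omega)
  · intro t ht1 ht
    simp only [mem_range] at ht
    rw [Nat.choose_eq_zero_of_lt (show n < t by omega), Nat.mul_zero]

/-- Shifted Vandermonde. -/
lemma vand2 (b M p : ℕ) :
    ∑ s ∈ range (b + 1), b.choose s * M.choose (p + s) = (M + b).choose (b + p) := by
  rw [vand3 M b (b + p)]
  have h0 : ∑ w ∈ range (b + p + 1), M.choose w * b.choose (b + p - w)
      = ∑ w ∈ Ico p (b + p + 1), M.choose w * b.choose (b + p - w) := by
    symm
    apply Finset.sum_subset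
    · intro x hx; simp at hx ⊢; omega
    · intro w hw hw2
      simp at hw hw2
      rw [Nat.choose_eq_zero_of_lt (show b < b + p - w by omega), Nat.mul_zero]
  rw [h0, Finset.sum_Ico_eq_sum_range]
  have hbp : b + p + 1 - p = b + 1 := by omega
  rw [hbp]
  refine Finset.sum_congr rfl fun s hs => ?_
  have hsb : s ≤ b := by simp at hs; omega
  have e1 : b + p - (p + s) = b - s := by omega
  rw [e1, Nat.choose_symm hsb, Nat.mul_comm]

lemma stepC (a b j t : ℕ) (ht : t ≤ j + b) :
    ∑ s ∈ range (b + 1), b.choose s * (a.choose (j + s) * (j + s).choose t)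
      = a.choose t * ((a + b) - t).choose ((j + b) - t) := by
  rcases le_or_gt t j with h | h
  · have h1 : ∀ s ∈ range (b + 1),
        b.choose s * (a.choose (j + s) * (j + s).choose t)
          = a.choose t * (b.choose s * (a - t).choose ((j - t) + s)) := by
      intro s _
      rw [choose_mul' (by omega : t ≤ j + s)]
      have e : j + s - t = (j - t) + s := by omega
      rw [e]; ring
    rw [Finset.sum_congr rfl h1, ← Finset.mul_sum, vand2]
    rcases le_or_gt t a with hta | hta
    · have e1 : (a - t) + b = (a + b) - t := by omega
      have e2 : b + (j - t) = (j + b) - t := by omega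
      rw [e1, e2]
    · rw [Nat.choose_eq_zero_of_lt hta, Nat.zero_mul, Nat.zero_mul]
  · set r := t - j with hr
    have htr : t = j + r := by omega
    have hrb : r ≤ b := by omega
    have h0 : ∑ s ∈ range (b + 1), b.choose s * (a.choose (j + s) * (j + s).choose t)
        = ∑ s ∈ Ico r (b + 1), b.choose s * (a.choose (j + s) * (j + s).choose t) := by
      symm
      apply Finset.sum_subset
      · intro x hx; simp at hx ⊢; omega
      · intro s hs hs2
        simp at hs hs2
        rw [Nat.choose_eq_zero_of_lt (show j + s < t by omega), Nat.mul_zero, Nat.mul_zero]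
    rw [h0, Finset.sum_Ico_eq_sum_range]
    have hb1 : b + 1 - r = (b - r) + 1 := by omega
    rw [hb1]
    have h1 : ∀ w ∈ range ((b - r) + 1),
        b.choose (r + w) * (a.choose (j + (r + w)) * (j + (r + w)).choose t)
          = a.choose t * ((a - t).choose w * b.choose ((b - r) - w)) := by
      intro w hw
      have hwbr : w ≤ b - r := by simp at hw; omega
      rw [choose_mul' (by omega : t ≤ j + (r + w))]
      have e1 : j + (r + w) - t = w := by omega
      have e2 : b.choose (r + w) = b.choose ((b - r) - w) := by
        rw [← Nat.choose_symm (by omega : r + w ≤ b)]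
        congr 1; omega
      rw [e1, e2]; ring
    rw [Finset.sum_congr rfl h1, ← Finset.mul_sum]
    have h2 : ∑ w ∈ range ((b - r) + 1), (a - t).choose w * b.choose ((b - r) - w)
        = ((a - t) + b).choose (b - r) := by
      exact (vand3 _ _ _).symm
    rw [h2]
    rcases le_or_gt t a with hta | hta
    · have e1 : (a - t) + b = (a + b) - t := by omega
      have e2 : b - r = (j + b) - t := by omega
      rw [e1, e2]
    · rw [Nat.choose_eq_zero_of_lt hta, Nat.zero_mul, Nat.zero_mul]

lemma keyNat (a b j : ℕ) :
    ∑ s ∈ range (b + 1), b.choose s * (a.choose (j + s) * (a + b + j + s).choose (j + s))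
      = (a + b + j).choose (j + b) * (a + b).choose (j + b) := by
  have h1 : ∀ s ∈ range (b + 1),
      b.choose s * (a.choose (j + s) * (a + b + j + s).choose (j + s))
        = ∑ t ∈ range (j + b + 1),
            (a + b).choose t * (b.choose s * (a.choose (j + s) * (j + s).choose t)) := by
    intro s hs
    have hsb : s ≤ b := by simp at hs; omega
    have e : a + b + j + s = (a + b) + (j + s) := by omega
    rw [e, vandsym (a + b) (j + s) (j + b) (by omega), Finset.mul_sum, Finset.mul_sum]
    exact Finset.sum_congr rfl fun t _ => by ring
  rw [Finset.sum_congr rfl h1, Finset.sum_comm]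
  have h2 : ∀ t ∈ range (j + b + 1),
      ∑ s ∈ range (b + 1),
          (a + b).choose t * (b.choose s * (a.choose (j + s) * (j + s).choose t))
        = (a + b).choose (j + b) * ((j + b).choose t * a.choose t) := by
    intro t ht
    have htjb : t ≤ j + b := by simp at ht; omega
    rw [← Finset.mul_sum, stepC a b j t htjb]
    have hcm : (a + b).choose (j + b) * (j + b).choose t
        = (a + b).choose t * ((a + b) - t).choose ((j + b) - t) := choose_mul' htjb
    calc (a + b).choose t * (a.choose t * ((a + b) - t).choose ((j + b) - t))
        = ((a + b).choose t * ((a + b) - t).choose ((j + b) - t)) * a.choose t := by ring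
      _ = ((a + b).choose (j + b) * (j + b).choose t) * a.choose t := by rw [hcm]
      _ = (a + b).choose (j + b) * ((j + b).choose t * a.choose t) := by ring
  rw [Finset.sum_congr rfl h2, ← Finset.mul_sum]
  have h3 : ∑ t ∈ range (j + b + 1), (j + b).choose t * a.choose t
      = (a + b + j).choose (j + b) := by
    have hv := vandsym a (j + b) (j + b) le_rfl
    rw [show a + (j + b) = a + b + j by omega] at hv
    exact (Finset.sum_congr rfl fun t _ => Nat.mul_comm _ _).trans hv.symm
  rw [h3, Nat.mul_comm]

lemma gbinom_zero (x : ℚ) : gbinom x 0 = 1 := by simp [gbinom]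

lemma gbinom_succ (x : ℚ) (k : ℕ) :
    gbinom x (k + 1) = gbinom x k * (x - k) / (k + 1) := by
  rw [gbinom, gbinom, Finset.prod_range_succ, Nat.factorial_succ]
  have h1 : (((k + 1) * Nat.factorial k : ℕ) : ℚ) = ((k : ℚ) + 1) * (Nat.factorial k : ℚ) := by
    push_cast; ring
  rw [h1, div_mul_eq_mul_div, div_div, mul_comm ((k : ℚ) + 1) (Nat.factorial k : ℚ)]

lemma gbinom_nat (n k : ℕ) : gbinom (n : ℚ) k = (n.choose k : ℚ) := by
  induction k with
  | zero => simp [gbinom_zero]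
  | succ k ih =>
    rw [gbinom_succ, ih]
    have hk1 : ((k : ℚ) + 1) ≠ 0 := by positivity
    rcases le_or_gt n k with h | h
    · rw [Nat.choose_eq_zero_of_lt (show n < k + 1 by omega)]
      rcases eq_or_lt_of_le h with h' | h'
      · subst h'; rw [show ((n : ℚ) - n) = 0 by ring]; simp
      · rw [Nat.choose_eq_zero_of_lt h']; simp
    · have hc := Nat.choose_succ_right_eq n k
      have hcast := congrArg (Nat.cast (R := ℚ)) hc
      push_cast [Nat.cast_sub h.le] at hcast
      rw [div_eq_iff hk1]
      linarith [hcast]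

lemma gbinom_neg (n k : ℕ) :
    gbinom (-(n : ℚ) - 1) k = (-1 : ℚ) ^ k * ((n + k).choose k : ℚ) := by
  induction k with
  | zero => simp [gbinom_zero]
  | succ k ih =>
    rw [gbinom_succ, ih]
    have hc := Nat.add_one_mul_choose_eq (n + k) k
    have hcast : ((n + k + 1) : ℚ) * ((n + k).choose k : ℚ)
        = ((n + k + 1).choose (k + 1) : ℚ) * ((k : ℚ) + 1) := by exact_mod_cast hc
    have hk1 : ((k : ℚ) + 1) ≠ 0 := by positivity
    have e : (n + (k + 1)).choose (k + 1) = (n + k + 1).choose (k + 1) := by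
      rw [← Nat.add_assoc]
    rw [e, div_eq_iff hk1]
    linear_combination ((-1 : ℚ)) ^ (k + 1) * hcast

/-- For positive integers `α, β`,
`∑_{j=1}^{α} (1/j) ∑_{k=j}^{α} (-1)^{k-j} C(α,k) C(-1-α-β,k) C(β,k-j)
 = ∑_{j=1}^{α} ((-1)^β/j) C(-α-1,j+β) C(α+β,j+β)` in `ℚ`. -/
theorem double_sum_identity (α β : ℕ) (hα : 1 ≤ α) (hβ : 1 ≤ β) :
    ∑ j ∈ Finset.Icc 1 α, (1 / (j : ℚ)) *
        ∑ k ∈ Finset.Icc j α, (-1 : ℚ)^(k - j) * gbinom (α : ℚ) k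
          * gbinom (-1 - (α : ℚ) - β) k * gbinom (β : ℚ) (k - j)
      = ∑ j ∈ Finset.Icc 1 α, ((-1 : ℚ)^β / (j : ℚ))
          * gbinom (-(α : ℚ) - 1) (j + β) * gbinom ((α : ℚ) + β) (j + β) := by
  refine Finset.sum_congr rfl fun j hj => ?_
  obtain ⟨hj1, hj2⟩ := Finset.mem_Icc.mp hj
  have hneg : (-1 - (α : ℚ) - β) = -(((α + β : ℕ) : ℚ)) - 1 := by push_cast; ring
  set g : ℕ → ℕ := fun k => α.choose k * ((α + β + k).choose k) * β.choose (k - j) with hg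
  have hinner : ∀ k ∈ Finset.Icc j α,
      (-1 : ℚ)^(k - j) * gbinom (α : ℚ) k
          * gbinom (-1 - (α : ℚ) - β) k * gbinom (β : ℚ) (k - j)
        = (-1 : ℚ)^j * ((g k : ℕ) : ℚ) := by
    intro k hk
    obtain ⟨hk1, hk2⟩ := Finset.mem_Icc.mp hk
    obtain ⟨d, rfl⟩ := Nat.exists_eq_add_of_le hk1
    rw [hneg, gbinom_neg, gbinom_nat, gbinom_nat, hg]
    have hd : j + d - j = d := by omega
    rw [hd]
    simp only []
    rw [hd]
    have h1 : ((-1 : ℚ))^d * (-1)^d = 1 := by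
      rw [← pow_add, ← two_mul, pow_mul]; norm_num
    rw [pow_add]
    push_cast
    linear_combination ((-1 : ℚ)^j * (α.choose (j + d) : ℚ)
      * (((α + β) + (j + d)).choose (j + d) : ℚ) * (β.choose d : ℚ)) * h1
  rw [Finset.sum_congr rfl hinner, ← Finset.mul_sum, ← Nat.cast_sum]
  have e1 : ∑ k ∈ Finset.Icc j α, g k = ∑ k ∈ Finset.Icc j (α + j + β), g k := by
    apply Finset.sum_subset
    · exact Finset.Icc_subset_Icc_right (by omega)
    · intro k hk hk2
      simp only [Finset.mem_Icc] at hk hk2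
      rw [hg]
      simp only []
      rw [Nat.choose_eq_zero_of_lt (show α < k by omega), Nat.zero_mul, Nat.zero_mul]
  have e2 : ∑ k ∈ Finset.Icc j (j + β), g k = ∑ k ∈ Finset.Icc j (α + j + β), g k := by
    apply Finset.sum_subset
    · exact Finset.Icc_subset_Icc_right (by omega)
    · intro k hk hk2
      simp only [Finset.mem_Icc] at hk hk2
      rw [hg]
      simp only []
      rw [Nat.choose_eq_zero_of_lt (show β < k - j by omega), Nat.mul_zero]
  have e3 : ∑ k ∈ Finset.Icc j (j + β), g k
      = ∑ s ∈ Finset.range (β + 1),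
          β.choose s * (α.choose (j + s) * ((α + β + j + s).choose (j + s))) := by
    rw [← Finset.Ico_add_one_right_eq_Icc, Finset.sum_Ico_eq_sum_range,
      show j + β + 1 - j = β + 1 by omega]
    refine Finset.sum_congr rfl fun s hs => ?_
    rw [hg]
    simp only []
    rw [show j + s - j = s by omega, show α + β + (j + s) = α + β + j + s by omega]
    ring
  have hkey : ∑ k ∈ Finset.Icc j α, g k
      = (α + β + j).choose (j + β) * (α + β).choose (j + β) := by
    rw [e1, ← e2, e3, keyNat]
  rw [hkey]
  rw [gbinom_neg α (j + β)]
  have hab : ((α : ℚ) + β) = (((α + β : ℕ) : ℚ)) := by push_cast; ring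
  rw [hab, gbinom_nat]
  rw [show α + (j + β) = α + β + j by omega]
  have h2 : ((-1 : ℚ))^β * (-1)^β = 1 := by
    rw [← pow_add, ← two_mul, pow_mul]; norm_num
  rw [pow_add]
  push_cast
  linear_combination (-((1 : ℚ) / j) * (-1)^j * ((α + β + j).choose (j + β) : ℚ)
    * (((α + β).choose (j + β)) : ℚ)) * h2
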